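/- Let G be a finite connected simple graph with vertices v₁, …, v_n. An edge valuation f ∈ T(G) is a critical point (maximum) of the weighted tree number τ over T(G) if and only if there exist constants λ₁, …, λ_n such that for every edge e with endpoints v_i and v_j one has τ_e(f) = λ_i + λ_j. -/

import Mathlib

set_option linter.unusedSectionVars false
set_option linter.unreachableTactic false
set_option linter.unusedTactic false
set_option maxHeartbeats 1600000


open Matrix Finset
open scoped Classical

namespace ExtremalGraphs

variable {V : Type*} [Fintype V] [DecidableEq V] (G : SimpleGraph V) [DecidableRel G.Adj]

/-- `P(G)`: the space of edge valuations: positive weights with total weight `|E(G)|`. -/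
def PSpace : Set (G.edgeSet → ℝ) :=
  {f | (∀ e, 0 < f e) ∧ ∑ e, f e = (Fintype.card G.edgeSet : ℝ)}

/-- `T(G)`: valuations in `P(G)` whose sum over the edges incident to each vertex `v`
equals the degree of `v` in `G`. -/
def TSpace : Set (G.edgeSet → ℝ) :=
  {f | f ∈ PSpace G ∧
    ∀ v : V, (∑ e : G.edgeSet, if v ∈ (e : Sym2 V) then f e else 0) = (G.degree v : ℝ)}

/-- A finite set `t` of edges of `G` is a spanning tree of `G` if the simple graph on
`V` with exactly those edges is a tree (connected, so spanning, and acyclic). -/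
def IsSpanningTree (t : Finset G.edgeSet) : Prop :=
  (SimpleGraph.fromEdgeSet ((fun e : G.edgeSet => (e : Sym2 V)) '' ↑t)).IsTree

/-- The weighted tree number `τ_f(G) = ∑_{T spanning tree of G} ∏_{e ∈ T} f(e)`. -/
noncomputable def tau (f : G.edgeSet → ℝ) : ℝ :=
  ∑ t : Finset G.edgeSet, if IsSpanningTree G t then ∏ e ∈ t, f e else 0

/-- The partial derivative `τ_e(f) = ∂τ/∂f(e)`: the sum over the spanning trees
containing `e` of the product of the weights of their other edges. -/
noncomputable def tauE (e : G.edgeSet) (f : G.edgeSet → ℝ) : ℝ :=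
  ∑ t : Finset G.edgeSet, if IsSpanningTree G t ∧ e ∈ t then ∏ e' ∈ t.erase e, f e' else 0




noncomputable def ord : V → ℕ := fun v => ((Fintype.equivFin V) v : ℕ)

lemma ord_inj : Function.Injective (ord (V := V)) := by
  intro a b h
  exact (Fintype.equivFin V).injective (Fin.val_injective h)

noncomputable def pairup : Sym2 V → V × V :=
  Sym2.lift ⟨fun a b => if ord a ≤ ord b then (a, b) else (b, a), by
    intro a b
    rcases le_or_gt (ord a) (ord b) with h | h
    · rcases eq_or_lt_of_le h with h' | h'
      · have : a = b := ord_inj h'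
        subst this; simp
      · simp [h, not_le.mpr h']
    · simp [not_le.mpr h, h.le]⟩

lemma pairup_mk (a b : V) :
    pairup s(a, b) = if ord a ≤ ord b then (a, b) else (b, a) := rfl

lemma pairup_spec (e : Sym2 V) : s((pairup e).1, (pairup e).2) = e := by
  induction e using Sym2.ind with
  | _ a b =>
    rw [pairup_mk]
    split
    · rfl
    · exact Sym2.eq_swap

lemma mem_iff_pairup {e : Sym2 V} {u : V} :
    u ∈ e ↔ u = (pairup e).1 ∨ u = (pairup e).2 := by
  conv_lhs => rw [← pairup_spec e]
  rw [Sym2.mem_iff]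

lemma pairup_ne {e : Sym2 V} (he : ¬ e.IsDiag) : (pairup e).1 ≠ (pairup e).2 := by
  intro h
  apply he
  rw [← pairup_spec e, h]
  exact Sym2.mk_isDiag_iff.mpr rfl

noncomputable def incZ (e : Sym2 V) (u : V) : ℤ :=
  if u = (pairup e).2 then 1 else if u = (pairup e).1 then -1 else 0

lemma incZ_mul_snd {a b u : V} (hab : a ≠ b) :
    incZ s(a, b) u * incZ s(a, b) b
      = (if u = b then 1 else 0) - (if u = a then 1 else 0) := by
  have hmk := pairup_mk a b
  unfold incZ
  split_ifs at hmk <;> rw [hmk] <;> simp only []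
  · by_cases h1 : u = b <;> by_cases h2 : u = a <;> simp_all [hab, Ne.symm hab]
  · by_cases h1 : u = b <;> by_cases h2 : u = a <;> simp_all [hab, Ne.symm hab]

lemma sum_mul_incZ (e : Sym2 V) (he : ¬ e.IsDiag) (c : V → ℤ) :
    ∑ u : V, c u * incZ e u = c (pairup e).2 - c (pairup e).1 := by
  have hne : (pairup e).1 ≠ (pairup e).2 := pairup_ne he
  have : ∀ u : V, c u * incZ e u
      = (if u = (pairup e).2 then c u else 0) + (if u = (pairup e).1 then - c u else 0) := by
    intro u
    unfold incZ
    by_cases h1 : u = (pairup e).2 <;> by_cases h2 : u = (pairup e).1 <;>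
      simp_all [hne] <;> ring
  rw [Finset.sum_congr rfl (fun u _ => this u), Finset.sum_add_distrib,
    Finset.sum_ite_eq', Finset.sum_ite_eq']
  simp [sub_eq_add_neg]

lemma sum_mul_incR (e : Sym2 V) (he : ¬ e.IsDiag) (c : V → ℝ) :
    ∑ u : V, c u * (incZ e u : ℝ) = c (pairup e).2 - c (pairup e).1 := by
  have hne : (pairup e).1 ≠ (pairup e).2 := pairup_ne he
  have : ∀ u : V, c u * (incZ e u : ℝ)
      = (if u = (pairup e).2 then c u else 0) + (if u = (pairup e).1 then - c u else 0) := by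
    intro u
    unfold incZ
    by_cases h1 : u = (pairup e).2 <;> by_cases h2 : u = (pairup e).1 <;>
      simp_all [hne] <;> ring
  rw [Finset.sum_congr rfl (fun u _ => this u), Finset.sum_add_distrib,
    Finset.sum_ite_eq', Finset.sum_ite_eq']
  simp [sub_eq_add_neg]

/-! ### net flow of a walk -/

noncomputable def netFlow {H : SimpleGraph V} : {a b : V} → H.Walk a b → Sym2 V → ℤ
  | _, _, SimpleGraph.Walk.nil => fun _ => 0
  | _, _, @SimpleGraph.Walk.cons _ _ x y _ _ p =>
      fun s => (if s = s(x, y) then incZ s y else 0) + netFlow p s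

lemma netFlow_eq_zero_of_not_mem {H : SimpleGraph V} {a b : V} (p : H.Walk a b)
    (s : Sym2 V) (hs : s ∉ p.edges) : netFlow p s = 0 := by
  induction p with
  | nil => rfl
  | cons h q ih =>
    rw [SimpleGraph.Walk.edges_cons] at hs
    simp only [List.mem_cons, not_or] at hs
    show (if s = _ then _ else 0) + netFlow q s = 0
    rw [if_neg hs.1, ih hs.2, add_zero]

lemma telescope {H : SimpleGraph V} {a b : V} (p : H.Walk a b) (F : Finset (Sym2 V))
    (hF : ∀ s ∈ p.edges, s ∈ F) (u : V) :
    ∑ s ∈ F, (incZ s u) * netFlow p s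
      = (if u = b then 1 else 0) - (if u = a then 1 else 0) := by
  induction p with
  | nil => simp [netFlow]
  | @cons x y c h q ih =>
    have hmemF : s(x, y) ∈ F := hF _ (by simp)
    have hq : ∀ s ∈ q.edges, s ∈ F := fun s hs => hF s (by simp [hs])
    have hxy : x ≠ y := h.ne
    have expand : ∀ s, (incZ s u) * netFlow (SimpleGraph.Walk.cons h q) s
        = (if s = s(x, y) then incZ s u * incZ s y else 0) + (incZ s u) * netFlow q s := by
      intro s
      show incZ s u * ((if s = s(x,y) then incZ s y else 0) + netFlow q s) = _
      by_cases hs : s = s(x, y) <;> simp [hs, mul_add]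
    rw [Finset.sum_congr rfl (fun s _ => expand s), Finset.sum_add_distrib, ih hq]
    have : ∑ s ∈ F, (if s = s(x, y) then incZ s u * incZ s y else 0)
        = incZ s(x,y) u * incZ s(x,y) y := by
      rw [Finset.sum_ite_eq' F (s(x,y)) (fun s => incZ s u * incZ s y), if_pos hmemF]
    rw [this, incZ_mul_snd hxy]
    ring

lemma netFlow_cons_first {H : SimpleGraph V} {x y c : V} (h : H.Adj x y) (q : H.Walk y c)
    (hq : s(x, y) ∉ q.edges) : netFlow (SimpleGraph.Walk.cons h q) s(x, y) = incZ s(x, y) y := by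
  show (if s(x,y) = s(x,y) then incZ s(x,y) y else 0) + netFlow q s(x,y) = _
  rw [if_pos rfl, netFlow_eq_zero_of_not_mem q _ hq, add_zero]

lemma incZ_snd_ne_zero {x y : V} (h : x ≠ y) : incZ s(x, y) y ≠ 0 := by
  have hmk := pairup_mk x y
  unfold incZ
  split_ifs at hmk <;> rw [hmk] <;> simp_all [h, Ne.symm h]

section CauchyBinet

variable {I E : Type*} [Fintype I] [Fintype E] [DecidableEq I] [DecidableEq E]

/-- determinant of the square submatrix of `A` given by the columns in `S`
(up to a sign depending on an arbitrary enumeration of `S`); `0` if `S` has the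
wrong cardinality. -/
noncomputable def colDet (A : Matrix I E ℝ) (S : Finset E) : ℝ :=
  if h : Fintype.card I = S.card then
    Matrix.det (A.submatrix id (fun j : I =>
      ((Fintype.equivOfCardEq (h.trans (Fintype.card_coe S).symm) j : {x // x ∈ S}) : E)))
  else 0

theorem cauchy_binet (A : Matrix I E ℝ) (w : E → ℝ) :
    Matrix.det (Matrix.of fun i j : I => ∑ e : E, A i e * w e * A j e)
      = ∑ S : Finset E, (∏ e ∈ S, w e) * colDet A S ^ 2 := by
  classical
  -- Step 1: expansion over all maps φ : I → E
  have step1 : Matrix.det (Matrix.of fun i j : I => ∑ e : E, A i e * w e * A j e)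
      = ∑ φ : I → E, (∏ j : I, A j (φ j) * w (φ j)) * Matrix.det (A.submatrix id φ) := by
    rw [Matrix.det_apply']
    have h1 : ∀ σ : Equiv.Perm I,
        ∏ i : I, (Matrix.of fun i j : I => ∑ e : E, A i e * w e * A j e) (σ i) i
          = ∑ φ : I → E, ∏ j : I, (A j (φ j) * w (φ j) * A (σ.symm j) (φ j)) := by
      intro σ
      have h2 : ∏ i : I, (Matrix.of fun i j : I => ∑ e : E, A i e * w e * A j e) (σ i) i
          = ∏ j : I, ∑ e : E, A j e * w e * A (σ.symm j) e := by
        rw [← Equiv.prod_comp σ (fun j => ∑ e : E, A j e * w e * A (σ.symm j) e)]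
        simp only [Matrix.of_apply, Equiv.symm_apply_apply]
      rw [h2, Finset.prod_univ_sum (fun _ => Finset.univ)
        (fun j e => A j e * w e * A (σ.symm j) e), Fintype.piFinset_univ]
    calc ∑ σ : Equiv.Perm I, (↑↑(Equiv.Perm.sign σ) : ℝ)
          * ∏ i : I, (Matrix.of fun i j : I => ∑ e : E, A i e * w e * A j e) (σ i) i
        = ∑ σ : Equiv.Perm I, ∑ φ : I → E, (↑↑(Equiv.Perm.sign σ) : ℝ)
            * ((∏ j : I, A j (φ j) * w (φ j)) * ∏ j : I, A (σ.symm j) (φ j)) := by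
          apply Finset.sum_congr rfl
          intro σ _
          rw [h1 σ, Finset.mul_sum]
          apply Finset.sum_congr rfl
          intro φ _
          rw [← Finset.prod_mul_distrib]
      _ = ∑ φ : I → E, ∑ σ : Equiv.Perm I, (↑↑(Equiv.Perm.sign σ) : ℝ)
            * ((∏ j : I, A j (φ j) * w (φ j)) * ∏ j : I, A (σ.symm j) (φ j)) :=
          Finset.sum_comm
      _ = ∑ φ : I → E, (∏ j : I, A j (φ j) * w (φ j)) * Matrix.det (A.submatrix id φ) := by
          apply Finset.sum_congr rfl
          intro φ _
          have hinv : ∑ σ : Equiv.Perm I, (↑↑(Equiv.Perm.sign σ) : ℝ)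
              * ((∏ j : I, A j (φ j) * w (φ j)) * ∏ j : I, A (σ.symm j) (φ j))
              = ∑ σ : Equiv.Perm I, (↑↑(Equiv.Perm.sign σ) : ℝ)
              * ((∏ j : I, A j (φ j) * w (φ j)) * ∏ j : I, A (σ j) (φ j)) := by
            rw [← Equiv.sum_comp (Equiv.inv (Equiv.Perm I))
              (fun σ : Equiv.Perm I => (↑↑(Equiv.Perm.sign σ) : ℝ)
                * ((∏ j : I, A j (φ j) * w (φ j)) * ∏ j : I, A (σ j) (φ j)))]
            apply Finset.sum_congr rfl
            intro σ _
            simp [Equiv.Perm.sign_inv, Equiv.Perm.inv_def]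
          rw [hinv, Matrix.det_apply']
          rw [Finset.mul_sum]
          apply Finset.sum_congr rfl
          intro σ _
          simp only [Matrix.submatrix_apply, id_eq]
          ring
  rw [step1, ← Finset.sum_fiberwise Finset.univ (fun φ : I → E => Finset.image φ Finset.univ)
    (fun φ => (∏ j : I, A j (φ j) * w (φ j)) * Matrix.det (A.submatrix id φ))]
  apply Finset.sum_congr rfl
  intro S _
  by_cases hS : Fintype.card I = S.card
  · -- fibers over an S of the right cardinality: bijections
    set e₀ : I ≃ {x // x ∈ S} := Fintype.equivOfCardEq (hS.trans (Fintype.card_coe S).symm)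
      with he₀
    set Dm : Matrix I I ℝ := A.submatrix id (fun j : I => ((e₀ j : {x // x ∈ S}) : E)) with hDm
    have hfiber : ∑ σ : Equiv.Perm I,
            (∏ j : I, A j ((e₀ (σ j) : {x // x ∈ S}) : E) * w ((e₀ (σ j) : {x // x ∈ S}) : E))
              * Matrix.det (A.submatrix id (fun j => ((e₀ (σ j) : {x // x ∈ S}) : E)))
        = ∑ φ ∈ Finset.filter (fun φ : I → E => Finset.image φ Finset.univ = S)
          Finset.univ, (∏ j : I, A j (φ j) * w (φ j)) * Matrix.det (A.submatrix id φ) := by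
      refine Finset.sum_bij
        (i := fun (σ : Equiv.Perm I) (_ : σ ∈ Finset.univ) =>
          (fun j : I => ((e₀ (σ j) : {x // x ∈ S}) : E))) ?_ ?_ ?_ ?_
      · intro σ _
        rw [Finset.mem_filter]
        refine ⟨Finset.mem_univ _, ?_⟩
        ext x
        rw [Finset.mem_image]
        constructor
        · rintro ⟨j, _, rfl⟩
          exact (e₀ (σ j)).2
        · intro hx
          exact ⟨σ.symm (e₀.symm ⟨x, hx⟩), Finset.mem_univ _, by simp⟩
      · intro σ₁ _ σ₂ _ hEq
        apply Equiv.ext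
        intro j
        apply e₀.injective
        apply Subtype.ext
        exact congrFun hEq j
      · intro φ hφ
        have hφ' : Finset.image φ Finset.univ = S := (Finset.mem_filter.mp hφ).2
        have hinj : Function.Injective φ := by
          have hcard : (Finset.image φ Finset.univ).card = (Finset.univ : Finset I).card := by
            rw [hφ', Finset.card_univ]
            exact hS.symm
          have h5 := Finset.injOn_of_card_image_eq hcard
          intro a b hab
          exact h5 (Finset.mem_coe.mpr (Finset.mem_univ a))
            (Finset.mem_coe.mpr (Finset.mem_univ b)) hab
        have hmem : ∀ j : I, φ j ∈ S := by
          intro j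
          rw [← hφ']
          exact Finset.mem_image_of_mem φ (Finset.mem_univ j)
        have hbij : Function.Bijective (fun j : I => (⟨φ j, hmem j⟩ : {x // x ∈ S})) := by
          rw [Fintype.bijective_iff_injective_and_card]
          constructor
          · intro a b hab
            exact hinj (congrArg Subtype.val hab)
          · rw [Fintype.card_coe]
            exact hS
        refine ⟨(Equiv.ofBijective _ hbij).trans e₀.symm, Finset.mem_univ _, ?_⟩
        funext j
        simp only [Equiv.trans_apply, Equiv.ofBijective_apply, Equiv.apply_symm_apply]
      · intro σ _
        rfl
    rw [← hfiber]
    have hterm : ∀ σ : Equiv.Perm I,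
        (∏ j : I, A j ((e₀ (σ j) : {x // x ∈ S}) : E) * w ((e₀ (σ j) : {x // x ∈ S}) : E))
          * Matrix.det (A.submatrix id (fun j => ((e₀ (σ j) : {x // x ∈ S}) : E)))
        = (∏ e ∈ S, w e) * ((↑↑(Equiv.Perm.sign σ) : ℝ) * (∏ j : I, Dm j (σ j)) * Dm.det) := by
      intro σ
      have hw : ∏ j : I, w ((e₀ (σ j) : {x // x ∈ S}) : E) = ∏ e ∈ S, w e := by
        rw [← Finset.prod_coe_sort S w]
        exact Equiv.prod_comp (σ.trans e₀) (fun c : {x // x ∈ S} => w ↑c)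
      have hsub : A.submatrix id (fun j => ((e₀ (σ j) : {x // x ∈ S}) : E))
          = Dm.submatrix id ⇑σ := by
        rw [hDm, Matrix.submatrix_submatrix]
        rfl
      rw [Finset.prod_mul_distrib, hw, hsub, Matrix.det_permute' σ Dm]
      have : ∏ j : I, A j ((e₀ (σ j) : {x // x ∈ S}) : E) = ∏ j : I, Dm j (σ j) := by
        apply Finset.prod_congr rfl
        intro j _
        rw [hDm]
        rfl
      rw [this]
      ring
    rw [Finset.sum_congr rfl (fun σ _ => hterm σ), ← Finset.mul_sum]
    have hdetT : ∑ σ : Equiv.Perm I, (↑↑(Equiv.Perm.sign σ) : ℝ)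
        * (∏ j : I, Dm j (σ j)) * Dm.det = Dm.det * Dm.det := by
      have h3 : ∑ σ : Equiv.Perm I, (↑↑(Equiv.Perm.sign σ) : ℝ) * (∏ j : I, Dm j (σ j))
          = Dm.det := by
        rw [← Matrix.det_transpose Dm, Matrix.det_apply']
        apply Finset.sum_congr rfl
        intro σ _
        rw [Matrix.transpose]
        rfl
      rw [← Finset.sum_mul, h3]
    rw [hdetT]
    have hcol : colDet A S = Dm.det := by
      rw [colDet, dif_pos hS]
    rw [hcol]
    ring
  · -- wrong cardinality: everything vanishes
    have hcol : colDet A S = 0 := by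
      rw [colDet, dif_neg hS]
    rw [hcol]
    have hzero : ∀ φ ∈ Finset.filter (fun φ : I → E => Finset.image φ Finset.univ = S)
        Finset.univ, (∏ j : I, A j (φ j) * w (φ j)) * Matrix.det (A.submatrix id φ) = 0 := by
      intro φ hφ
      have hφ' : Finset.image φ Finset.univ = S := (Finset.mem_filter.mp hφ).2
      have hninj : ¬ Function.Injective φ := by
        intro hinj
        apply hS
        rw [← hφ', Finset.card_image_of_injective Finset.univ hinj, Finset.card_univ]
      rw [Function.not_injective_iff] at hninj
      obtain ⟨a, b, hab, hne⟩ := hninj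
      have : Matrix.det (A.submatrix id φ) = 0 := by
        apply Matrix.det_zero_of_column_eq hne
        intro k
        simp [Matrix.submatrix_apply, hab]
      rw [this]
      ring
    rw [Finset.sum_congr rfl hzero]
    simp
end CauchyBinet

/-! ### the incidence determinant lemma -/


lemma edgeSet_H (S : Finset G.edgeSet) :
    (SimpleGraph.fromEdgeSet ((fun e : G.edgeSet => (e : Sym2 V)) '' ↑S)).edgeSet
      = (fun e : G.edgeSet => (e : Sym2 V)) '' ↑S := by
  rw [SimpleGraph.edgeSet_fromEdgeSet]
  ext x
  constructor
  · exact fun hx => hx.1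
  · intro hx
    refine ⟨hx, ?_⟩
    obtain ⟨c, _, rfl⟩ := hx
    exact G.not_isDiag_of_mem_edgeSet c.2

section DetLemma

variable (v0 : V) (S : Finset G.edgeSet)
  (e₀ : {u : V // u ≠ v0} ≃ {x : G.edgeSet // x ∈ S})

lemma reindex_sum (F : Sym2 V → ℤ) :
    ∑ j : {u : V // u ≠ v0}, F (↑↑(e₀ j) : Sym2 V)
      = ∑ s ∈ S.image (fun e : G.edgeSet => (e : Sym2 V)), F s := by
  rw [Finset.sum_image (fun x _ y _ h => Subtype.val_injective h),
    ← Finset.sum_coe_sort S (fun x => F ↑x)]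
  exact Equiv.sum_comp e₀ (fun c => F ↑↑c)

lemma sum_over_I {M : Type*} [AddCommMonoid M] (g : V → M) (hg : g v0 = 0) :
    ∑ u : {u : V // u ≠ v0}, g ↑u = ∑ v : V, g v := by
  rw [← Finset.sum_subtype (Finset.univ.erase v0)
      (fun x => by simp [Finset.mem_erase]) g]
  rw [← Finset.sum_erase_add Finset.univ g (Finset.mem_univ v0), hg, add_zero]

theorem det_incidence_sq :
    (Matrix.det (Matrix.of fun (u j : {u : V // u ≠ v0}) =>
        incZ (↑↑(e₀ j) : Sym2 V) (↑u : V))) ^ 2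
      = if IsSpanningTree G S then 1 else 0 := by
  classical
  set H : SimpleGraph V :=
    SimpleGraph.fromEdgeSet ((fun e : G.edgeSet => (e : Sym2 V)) '' ↑S) with hH
  set M : Matrix {u : V // u ≠ v0} {u : V // u ≠ v0} ℤ :=
    Matrix.of (fun (u j : {u : V // u ≠ v0}) => incZ (↑↑(e₀ j) : Sym2 V) (↑u : V)) with hM
  have hedgesH : H.edgeSet = (fun e : G.edgeSet => (e : Sym2 V)) '' ↑S := edgeSet_H G S
  have hwalk_edges : ∀ {a b : V} (p : H.Walk a b), ∀ s ∈ p.edges,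
      s ∈ S.image (fun e : G.edgeSet => (e : Sym2 V)) := by
    intro a b p s hs
    have := p.edges_subset_edgeSet hs
    rw [hedgesH] at this
    obtain ⟨c, hc, rfl⟩ := this
    exact Finset.mem_image.mpr ⟨c, hc, rfl⟩
  have bridge : ∀ (u : V) {a b2 : V} (p : H.Walk a b2),
      ∑ j : {u : V // u ≠ v0}, incZ (↑↑(e₀ j) : Sym2 V) u * netFlow p (↑↑(e₀ j) : Sym2 V)
        = (if u = b2 then 1 else 0) - (if u = a then 1 else 0) := by
    intro u a b2 p
    exact (reindex_sum G v0 S e₀ (fun s => incZ s u * netFlow p s)).trans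
      (telescope p _ (fun s hs => hwalk_edges p s hs) u)
  by_cases hTree : IsSpanningTree G S
  · -- spanning tree: determinant is ±1
    rw [if_pos hTree]
    have hconn : H.Connected := hTree.isConnected
    have pick : ∀ v : V, H.Walk v0 v := fun v => (hconn.preconnected v0 v).some
    set Q : Matrix {u : V // u ≠ v0} {u : V // u ≠ v0} ℤ :=
      Matrix.of (fun j u => netFlow (pick ↑u) (↑↑(e₀ j) : Sym2 V)) with hQ
    have hMQ : M * Q = 1 := by
      ext u u'
      rw [Matrix.mul_apply]
      have h1 : ∑ j : {u : V // u ≠ v0}, M u j * Q j u'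
          = ∑ j : {u : V // u ≠ v0},
              incZ (↑↑(e₀ j) : Sym2 V) ↑u * netFlow (pick ↑u') (↑↑(e₀ j) : Sym2 V) := rfl
      rw [h1, bridge ↑u (pick ↑u')]
      have hune : (↑u : V) ≠ v0 := u.2
      by_cases h : u = u'
      · subst h
        simp [Matrix.one_apply, hune]
      · have h2 : (↑u : V) ≠ ↑u' := fun hh => h (Subtype.ext hh)
        simp [Matrix.one_apply, hune, h, h2]
    have hdet : M.det * Q.det = 1 := by
      rw [← Matrix.det_mul, hMQ, Matrix.det_one]
    rcases Int.isUnit_iff.mp (IsUnit.of_mul_eq_one _ hdet) with h | h <;> rw [h] <;> norm_num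
  · -- not a spanning tree: determinant is 0
    rw [if_neg hTree]
    have hdet0 : M.det = 0 := by
      by_cases hconn : H.Connected
      · -- connected but not acyclic: a cycle gives a kernel vector
        have hnacyc : ¬ H.IsAcyclic := fun hacyc => hTree ⟨hconn, hacyc⟩
        unfold SimpleGraph.IsAcyclic at hnacyc
        push_neg at hnacyc
        obtain ⟨v, c, hc⟩ := hnacyc
        cases c with
        | nil => exact absurd rfl hc.ne_nil
        | @cons _ b _ hadj q =>
          have hnodup : s(v, b) ∉ q.edges := by
            have := hc.edges_nodup
            rw [SimpleGraph.Walk.edges_cons] at this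
            exact (List.nodup_cons.mp this).1
          set y : {u : V // u ≠ v0} → ℤ :=
            fun j => netFlow (SimpleGraph.Walk.cons hadj q) (↑↑(e₀ j) : Sym2 V) with hy
          have hMy : M *ᵥ y = 0 := by
            funext u
            show ∑ j, M u j * y j = 0
            have h1 : ∑ j : {u : V // u ≠ v0}, M u j * y j
                = ∑ j : {u : V // u ≠ v0}, incZ (↑↑(e₀ j) : Sym2 V) ↑u
                    * netFlow (SimpleGraph.Walk.cons hadj q) (↑↑(e₀ j) : Sym2 V) := rfl
            rw [h1, bridge ↑u (SimpleGraph.Walk.cons hadj q)]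
            ring
          have hyne : y ≠ 0 := by
            have hmem : s(v, b) ∈ H.edgeSet := H.mem_edgeSet.mpr hadj
            rw [hedgesH] at hmem
            obtain ⟨c0, hc0S, hc0eq⟩ := hmem
            intro h0
            have h1 := congrFun h0 (e₀.symm ⟨c0, hc0S⟩)
            rw [hy] at h1
            simp only [Equiv.apply_symm_apply, Pi.zero_apply] at h1
            have hc0eq' : (c0 : Sym2 V) = s(v, b) := hc0eq
            rw [hc0eq', netFlow_cons_first hadj q hnodup] at h1
            exact incZ_snd_ne_zero hadj.ne h1
          exact Matrix.exists_mulVec_eq_zero_iff.mp ⟨y, hyne, hMy⟩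
      · -- disconnected: indicator of the component of v0 gives a left kernel vector
        have hv1ex : ∃ v : V, ¬ H.Reachable v0 v := by
          by_contra hcon
          push_neg at hcon
          haveI : Nonempty V := ⟨v0⟩
          exact hconn ⟨fun a b => (hcon a).symm.trans (hcon b)⟩
        obtain ⟨v1, hv1⟩ := hv1ex
        have hadj_inv : ∀ a b : V, H.Adj a b →
            (if H.Reachable v0 a then (0:ℤ) else 1) = (if H.Reachable v0 b then 0 else 1) := by
          intro a b hab
          have hiff : H.Reachable v0 a ↔ H.Reachable v0 b :=
            ⟨fun r => r.trans hab.reachable, fun r => r.trans hab.symm.reachable⟩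
          by_cases h : H.Reachable v0 a
          · rw [if_pos h, if_pos (hiff.mp h)]
          · rw [if_neg h, if_neg (fun hh => h (hiff.mpr hh))]
        have hxM : (fun u : {u : V // u ≠ v0} => if H.Reachable v0 ↑u then (0:ℤ) else 1) ᵥ* M
            = 0 := by
          funext j
          show ∑ u : {u : V // u ≠ v0},
              (if H.Reachable v0 ↑u then (0:ℤ) else 1) * M u j = 0
          have h1 : ∑ u : {u : V // u ≠ v0},
              (if H.Reachable v0 ↑u then (0:ℤ) else 1) * M u j
              = ∑ u : {u : V // u ≠ v0},
                (fun w : V => (if H.Reachable v0 w then (0:ℤ) else 1) * incZ (↑↑(e₀ j)) w) ↑u :=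
            rfl
          rw [h1, sum_over_I v0
            (fun w : V => (if H.Reachable v0 w then (0:ℤ) else 1) * incZ (↑↑(e₀ j)) w)
            (by simp [SimpleGraph.Reachable.refl])]
          have h2 : ∑ w : V, (if H.Reachable v0 w then (0:ℤ) else 1) * incZ (↑↑(e₀ j)) w
              = (if H.Reachable v0 (pairup (↑↑(e₀ j) : Sym2 V)).2 then (0:ℤ) else 1)
                - (if H.Reachable v0 (pairup (↑↑(e₀ j) : Sym2 V)).1 then (0:ℤ) else 1) :=
            sum_mul_incZ _ (G.not_isDiag_of_mem_edgeSet (↑(e₀ j) : G.edgeSet).2) _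
          rw [h2]
          have hadjH : H.Adj (pairup (↑↑(e₀ j) : Sym2 V)).1 (pairup (↑↑(e₀ j) : Sym2 V)).2 := by
            rw [← H.mem_edgeSet, pairup_spec, hedgesH]
            exact ⟨↑(e₀ j), (e₀ j).2, rfl⟩
          rw [← hadj_inv _ _ hadjH]
          ring
        have hxne : (fun u : {u : V // u ≠ v0} => if H.Reachable v0 ↑u then (0:ℤ) else 1)
            ≠ 0 := by
          intro h0
          have hv1ne : v1 ≠ v0 := fun hh => hv1 (by rw [hh])
          have := congrFun h0 ⟨v1, hv1ne⟩
          simp only [if_neg hv1, Pi.zero_apply] at this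
          exact one_ne_zero this
        exact Matrix.exists_vecMul_eq_zero_iff.mp ⟨_, hxne, hxM⟩
    rw [hdet0]
    ring

end DetLemma


/-! ### the weighted matrix tree theorem -/

lemma IsSpanningTree.card_eq {S : Finset G.edgeSet} (hS : IsSpanningTree G S) :
    S.card + 1 = Fintype.card V := by
  classical
  have hT : (SimpleGraph.fromEdgeSet ((fun e : G.edgeSet => (e : Sym2 V)) '' ↑S)).IsTree := hS
  have hcount := SimpleGraph.IsTree.card_edgeFinset hT
  have h1 : (SimpleGraph.fromEdgeSet ((fun e : G.edgeSet => (e : Sym2 V)) '' ↑S)).edgeFinset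
      = Finset.image (fun e : G.edgeSet => (e : Sym2 V)) S := by
    rw [SimpleGraph.edgeFinset, Set.toFinset_congr (edgeSet_H G S), Set.toFinset_image,
      Finset.toFinset_coe]
  rw [h1, Finset.card_image_of_injective S Subtype.val_injective] at hcount
  exact hcount

lemma card_I (v0 : V) : Fintype.card {u : V // u ≠ v0} = Fintype.card V - 1 := by
  classical
  have h := Fintype.card_subtype_compl (fun x : V => x = v0)
  rw [Fintype.card_subtype_eq] at h
  exact h

noncomputable def inciMat (v0 : V) : Matrix {u : V // u ≠ v0} G.edgeSet ℝ :=
  Matrix.of fun u e => ((incZ (e : Sym2 V) (u : V) : ℤ) : ℝ)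

lemma colDet_sq (v0 : V) (S : Finset G.edgeSet) :
    colDet (inciMat G v0) S ^ 2 = if IsSpanningTree G S then 1 else 0 := by
  classical
  by_cases h : Fintype.card {u : V // u ≠ v0} = S.card
  · set e₀ : {u : V // u ≠ v0} ≃ {x : G.edgeSet // x ∈ S} :=
      Fintype.equivOfCardEq (h.trans (Fintype.card_coe S).symm) with he₀
    have hc : colDet (inciMat G v0) S
        = (((Matrix.det (Matrix.of fun (u j : {u : V // u ≠ v0}) =>
            incZ (↑↑(e₀ j) : Sym2 V) (↑u : V))) : ℤ) : ℝ) := by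
      rw [colDet, dif_pos h]
      exact (RingHom.map_det (Int.castRingHom ℝ) (Matrix.of fun (u j : {u : V // u ≠ v0}) =>
        incZ (↑↑(e₀ j) : Sym2 V) (↑u : V))).symm
    rw [hc, ← Int.cast_pow, det_incidence_sq G v0 S e₀]
    split <;> simp
  · rw [colDet, dif_neg h]
    rw [if_neg]
    · ring
    · intro hT
      apply h
      have h1 := hT.card_eq
      have h2 := card_I v0
      omega

noncomputable def lapMat (v0 : V) (w : G.edgeSet → ℝ) :
    Matrix {u : V // u ≠ v0} {u : V // u ≠ v0} ℝ :=
  Matrix.of fun u u' => ∑ e : G.edgeSet,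
    ((incZ (e : Sym2 V) (u : V) : ℤ) : ℝ) * w e * ((incZ (e : Sym2 V) (u' : V) : ℤ) : ℝ)

theorem matrix_tree (v0 : V) (w : G.edgeSet → ℝ) :
    tau G w = Matrix.det (lapMat G v0 w) := by
  classical
  have h0 : lapMat G v0 w = Matrix.of fun i j : {u : V // u ≠ v0} =>
      ∑ e : G.edgeSet, inciMat G v0 i e * w e * inciMat G v0 j e := rfl
  rw [h0, cauchy_binet (inciMat G v0) w, tau]
  apply Finset.sum_congr rfl
  intro S _
  rw [colDet_sq G v0 S]
  split <;> simp

/-! ### positive definiteness of the weighted Laplacian -/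

lemma reach_const {H : SimpleGraph V} {y : V → ℝ} (hy : ∀ a b : V, H.Adj a b → y a = y b)
    {a b : V} (h : H.Reachable a b) : y a = y b := by
  obtain ⟨p⟩ := h
  induction p with
  | nil => rfl
  | cons hadj q ih => exact (hy _ _ hadj).trans ih

lemma lapMat_posDef (hG : G.Connected) (v0 : V) (w : G.edgeSet → ℝ) (hw : ∀ e, 0 < w e) :
    (lapMat G v0 w).PosDef := by
  classical
  set xhatf : ({u : V // u ≠ v0} → ℝ) → V → ℝ :=
    fun x v => if h : v = v0 then 0 else x ⟨v, h⟩ with hxhatf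
  have hxhat_eq : ∀ (x : {u : V // u ≠ v0} → ℝ) (u : {u : V // u ≠ v0}),
      xhatf x ↑u = x u := by
    intro x u
    rw [hxhatf]
    simp only [dif_neg u.2]
  have hquad : ∀ x : {u : V // u ≠ v0} → ℝ,
      x ⬝ᵥ (lapMat G v0 w) *ᵥ x = ∑ e : G.edgeSet,
        w e * (xhatf x (pairup (e : Sym2 V)).2 - xhatf x (pairup (e : Sym2 V)).1) ^ 2 := by
    intro x
    have hDelta : ∀ e : G.edgeSet,
        ∑ u : {u : V // u ≠ v0}, x u * ((incZ (↑e : Sym2 V) (↑u : V) : ℤ) : ℝ)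
        = xhatf x (pairup (e : Sym2 V)).2 - xhatf x (pairup (e : Sym2 V)).1 := by
      intro e
      have h1 : ∑ u : {u : V // u ≠ v0}, x u * ((incZ (↑e : Sym2 V) (↑u : V) : ℤ) : ℝ)
          = ∑ u : {u : V // u ≠ v0},
            (fun v : V => xhatf x v * ((incZ (↑e : Sym2 V) v : ℤ) : ℝ)) ↑u := by
        apply Finset.sum_congr rfl
        intro u _
        simp only [hxhat_eq]
      rw [h1, sum_over_I v0 (fun v : V => xhatf x v * ((incZ (↑e : Sym2 V) v : ℤ) : ℝ))
        (by simp [hxhatf])]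
      exact sum_mul_incR _ (G.not_isDiag_of_mem_edgeSet e.2) (xhatf x)
    have hmv : ∀ u : {u : V // u ≠ v0}, ((lapMat G v0 w) *ᵥ x) u
        = ∑ e : G.edgeSet, ((incZ (↑e : Sym2 V) (↑u : V) : ℤ) : ℝ) * w e *
            (xhatf x (pairup (e : Sym2 V)).2 - xhatf x (pairup (e : Sym2 V)).1) := by
      intro u
      show ∑ u' : {u : V // u ≠ v0}, (∑ e : G.edgeSet,
          ((incZ (↑e : Sym2 V) (↑u : V) : ℤ) : ℝ) * w e
            * ((incZ (↑e : Sym2 V) (↑u' : V) : ℤ) : ℝ)) * x u' = _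
      calc ∑ u' : {u : V // u ≠ v0}, (∑ e : G.edgeSet,
            ((incZ (↑e : Sym2 V) (↑u : V) : ℤ) : ℝ) * w e
              * ((incZ (↑e : Sym2 V) (↑u' : V) : ℤ) : ℝ)) * x u'
          = ∑ u' : {u : V // u ≠ v0}, ∑ e : G.edgeSet,
            ((incZ (↑e : Sym2 V) (↑u : V) : ℤ) : ℝ) * w e
              * ((incZ (↑e : Sym2 V) (↑u' : V) : ℤ) : ℝ) * x u' := by
            apply Finset.sum_congr rfl
            intro u' _
            rw [Finset.sum_mul]
        _ = ∑ e : G.edgeSet, ∑ u' : {u : V // u ≠ v0},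
            ((incZ (↑e : Sym2 V) (↑u : V) : ℤ) : ℝ) * w e
              * ((incZ (↑e : Sym2 V) (↑u' : V) : ℤ) : ℝ) * x u' := Finset.sum_comm
        _ = ∑ e : G.edgeSet, ((incZ (↑e : Sym2 V) (↑u : V) : ℤ) : ℝ) * w e *
            (xhatf x (pairup (e : Sym2 V)).2 - xhatf x (pairup (e : Sym2 V)).1) := by
            apply Finset.sum_congr rfl
            intro e _
            rw [← hDelta e, Finset.mul_sum]
            apply Finset.sum_congr rfl
            intro u' _
            ring
    calc x ⬝ᵥ (lapMat G v0 w) *ᵥ x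
        = ∑ u : {u : V // u ≠ v0}, x u * ∑ e : G.edgeSet,
            ((incZ (↑e : Sym2 V) (↑u : V) : ℤ) : ℝ) * w e *
            (xhatf x (pairup (e : Sym2 V)).2 - xhatf x (pairup (e : Sym2 V)).1) := by
          apply Finset.sum_congr rfl
          intro u _
          rw [hmv u]
      _ = ∑ u : {u : V // u ≠ v0}, ∑ e : G.edgeSet,
            x u * (((incZ (↑e : Sym2 V) (↑u : V) : ℤ) : ℝ) * w e *
            (xhatf x (pairup (e : Sym2 V)).2 - xhatf x (pairup (e : Sym2 V)).1)) := by
          apply Finset.sum_congr rfl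
          intro u _
          rw [Finset.mul_sum]
      _ = ∑ e : G.edgeSet, ∑ u : {u : V // u ≠ v0},
            x u * (((incZ (↑e : Sym2 V) (↑u : V) : ℤ) : ℝ) * w e *
            (xhatf x (pairup (e : Sym2 V)).2 - xhatf x (pairup (e : Sym2 V)).1)) :=
          Finset.sum_comm
      _ = ∑ e : G.edgeSet,
            w e * (xhatf x (pairup (e : Sym2 V)).2 - xhatf x (pairup (e : Sym2 V)).1) ^ 2 := by
          apply Finset.sum_congr rfl
          intro e _
          have h6 : ∑ u : {u : V // u ≠ v0},
              x u * (((incZ (↑e : Sym2 V) (↑u : V) : ℤ) : ℝ) * w e *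
              (xhatf x (pairup (e : Sym2 V)).2 - xhatf x (pairup (e : Sym2 V)).1))
              = (∑ u : {u : V // u ≠ v0}, x u * ((incZ (↑e : Sym2 V) (↑u : V) : ℤ) : ℝ))
                * (w e * (xhatf x (pairup (e : Sym2 V)).2 - xhatf x (pairup (e : Sym2 V)).1)) := by
            rw [Finset.sum_mul]
            apply Finset.sum_congr rfl
            intro u _
            ring
          rw [h6, hDelta e]
          ring
  apply Matrix.PosDef.of_dotProduct_mulVec_pos
  · -- hermitian
    show (lapMat G v0 w)ᴴ = lapMat G v0 w
    ext u u'
    simp only [Matrix.conjTranspose_apply, star_trivial, lapMat, Matrix.of_apply]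
    apply Finset.sum_congr rfl
    intro e _
    ring
  · -- positivity
    intro x hx
    have hstar : star x = x := funext fun u => star_trivial _
    rw [hstar, hquad x]
    have hterm_nonneg : ∀ e : G.edgeSet, e ∈ Finset.univ → (0:ℝ) ≤
        w e * (xhatf x (pairup (e : Sym2 V)).2 - xhatf x (pairup (e : Sym2 V)).1) ^ 2 :=
      fun e _ => mul_nonneg (hw e).le (sq_nonneg _)
    rcases (Finset.sum_nonneg hterm_nonneg).eq_or_lt with h0 | h0
    · -- sum zero would force x = 0
      exfalso
      have hallzero := (Finset.sum_eq_zero_iff_of_nonneg hterm_nonneg).mp h0.symm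
      have hDelta0 : ∀ e : G.edgeSet,
          xhatf x (pairup (e : Sym2 V)).2 = xhatf x (pairup (e : Sym2 V)).1 := by
        intro e
        have h1 := hallzero e (Finset.mem_univ e)
        rcases mul_eq_zero.mp h1 with h2 | h2
        · exact absurd h2 (hw e).ne'
        · have := pow_eq_zero_iff (n := 2) (by norm_num) |>.mp h2
          linarith [this]
      have hadj : ∀ a b : V, G.Adj a b → xhatf x a = xhatf x b := by
        intro a b hab
        have he : s(a, b) ∈ G.edgeSet := (G.mem_edgeSet).mpr hab
        have h1 := hDelta0 ⟨s(a, b), he⟩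
        have hmk := pairup_mk a b
        have h1' : xhatf x (pairup s(a, b)).2 = xhatf x (pairup s(a, b)).1 := h1
        split_ifs at hmk
        · rw [hmk] at h1'
          exact h1'.symm
        · rw [hmk] at h1'
          exact h1'
      have hzero : ∀ v : V, xhatf x v = 0 := by
        intro v
        have h2 := reach_const hadj (hG.preconnected v v0)
        rw [h2]
        simp [hxhatf]
      apply hx
      funext u
      show x u = 0
      rw [← hxhat_eq x u, hzero ↑u]
    · exact h0



/-! ### derivative of tau -/

lemma hasDerivAt_tau (x d : G.edgeSet → ℝ) :
    HasDerivAt (fun t : ℝ => tau G (x + t • d)) (∑ e : G.edgeSet, d e * tauE G e x) 0 := by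
  classical
  have hfun : (fun t : ℝ => tau G (x + t • d))
      = fun t : ℝ => ∑ S : Finset G.edgeSet,
          if IsSpanningTree G S then ∏ e ∈ S, (x e + t * d e) else 0 := by
    funext t
    rw [tau]
    apply Finset.sum_congr rfl
    intro S _
    split
    · apply Finset.prod_congr rfl
      intro e _
      simp
    · rfl
  rw [hfun]
  have hterm : ∀ S : Finset G.edgeSet, HasDerivAt
      (fun t : ℝ => if IsSpanningTree G S then ∏ e ∈ S, (x e + t * d e) else 0)
      (if IsSpanningTree G S then ∑ e ∈ S, (∏ e' ∈ S.erase e, x e') * d e else 0) 0 := by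
    intro S
    by_cases hS : IsSpanningTree G S
    · simp only [if_pos hS]
      have h1 : ∀ e ∈ S, HasDerivAt (fun t : ℝ => x e + t * d e) (d e) 0 :=
        fun e _ => by simpa using ((hasDerivAt_id (0:ℝ)).mul_const (d e)).const_add (x e)
      have h2 := HasDerivAt.fun_finsetProd h1
      simpa using h2
    · simp only [if_neg hS]
      exact hasDerivAt_const 0 0
  have h3 := HasDerivAt.fun_sum (u := Finset.univ) (fun S _ => hterm S)
  have hval : ∑ S : Finset G.edgeSet,
      (if IsSpanningTree G S then ∑ e ∈ S, (∏ e' ∈ S.erase e, x e') * d e else 0)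
      = ∑ e : G.edgeSet, d e * tauE G e x := by
    have hper : ∀ S : Finset G.edgeSet,
        (if IsSpanningTree G S then ∑ e ∈ S, (∏ e' ∈ S.erase e, x e') * d e else 0)
        = ∑ e : G.edgeSet,
            (if IsSpanningTree G S ∧ e ∈ S then (∏ e' ∈ S.erase e, x e') * d e else 0) := by
      intro S
      by_cases hS : IsSpanningTree G S
      · rw [if_pos hS]
        calc ∑ e ∈ S, (∏ e' ∈ S.erase e, x e') * d e
            = ∑ e ∈ Finset.univ ∩ S, (∏ e' ∈ S.erase e, x e') * d e := by
              rw [Finset.univ_inter]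
          _ = ∑ e : G.edgeSet, (if e ∈ S then (∏ e' ∈ S.erase e, x e') * d e else 0) :=
              (Finset.sum_ite_mem Finset.univ S _).symm
          _ = ∑ e : G.edgeSet,
              (if IsSpanningTree G S ∧ e ∈ S then (∏ e' ∈ S.erase e, x e') * d e else 0) := by
              apply Finset.sum_congr rfl
              intro e _
              simp [hS]
      · rw [if_neg hS]
        symm
        apply Finset.sum_eq_zero
        intro e _
        simp [hS]
    rw [Finset.sum_congr rfl (fun S _ => hper S), Finset.sum_comm]
    apply Finset.sum_congr rfl
    intro e _
    rw [tauE, Finset.mul_sum]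
    apply Finset.sum_congr rfl
    intro S _
    split <;> ring
  rw [hval] at h3
  exact h3

/-! ### the key inequality -/

lemma dotProduct_self_pos {ι : Type*} [Fintype ι] {v : ι → ℝ} (hv : v ≠ 0) :
    0 < v ⬝ᵥ v := by
  have h1 : ∀ i ∈ Finset.univ, (0:ℝ) ≤ v i * v i := fun i _ => mul_self_nonneg _
  have h2 : v ⬝ᵥ v = ∑ i : ι, v i * v i := rfl
  rw [h2]
  rcases (Finset.sum_nonneg h1).eq_or_lt with h0 | h0
  · exfalso
    have h3 := (Finset.sum_eq_zero_iff_of_nonneg h1).mp h0.symm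
    apply hv
    funext i
    exact mul_self_eq_zero.mp (h3 i (Finset.mem_univ i))
  · exact h0

lemma lapMat_isHermitian (v0 : V) (w : G.edgeSet → ℝ) : (lapMat G v0 w).IsHermitian := by
  show (lapMat G v0 w)ᴴ = lapMat G v0 w
  ext u u'
  simp only [Matrix.conjTranspose_apply, star_trivial, lapMat, Matrix.of_apply]
  apply Finset.sum_congr rfl
  intro e _
  ring

open scoped MatrixOrder in
lemma tau_le_of_vanishing (hG : G.Connected) (f g : G.edgeSet → ℝ)
    (hf : ∀ e, 0 < f e) (hg : ∀ e, 0 < g e)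
    (hgrad : ∑ e : G.edgeSet, (g e - f e) * tauE G e f = 0) :
    tau G g ≤ tau G f := by
  classical
  obtain ⟨v0⟩ : Nonempty V := hG.nonempty
  set d : G.edgeSet → ℝ := fun e => g e - f e with hd
  set L0 := lapMat G v0 f with hL0def
  set Ld := lapMat G v0 d with hLddef
  have hkey : ∀ t : ℝ, lapMat G v0 (f + t • d) = L0 + t • Ld := by
    intro t
    ext u u'
    show ∑ e : G.edgeSet, ((incZ (↑e : Sym2 V) (↑u : V) : ℤ) : ℝ) * ((f + t • d) e)
        * ((incZ (↑e : Sym2 V) (↑u' : V) : ℤ) : ℝ) = (L0 + t • Ld) u u'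
    have hRHS : (L0 + t • Ld) u u'
        = (∑ e : G.edgeSet, ((incZ (↑e : Sym2 V) (↑u : V) : ℤ) : ℝ) * f e
            * ((incZ (↑e : Sym2 V) (↑u' : V) : ℤ) : ℝ))
          + t * ∑ e : G.edgeSet, ((incZ (↑e : Sym2 V) (↑u : V) : ℤ) : ℝ) * d e
            * ((incZ (↑e : Sym2 V) (↑u' : V) : ℤ) : ℝ) := by
      simp [hL0def, hLddef, lapMat, Matrix.add_apply, Matrix.smul_apply, smul_eq_mul]
    rw [hRHS, Finset.mul_sum, ← Finset.sum_add_distrib]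
    apply Finset.sum_congr rfl
    intro e _
    simp only [Pi.add_apply, Pi.smul_apply, smul_eq_mul]
    ring
  have hfg : f + (1:ℝ) • d = g := by
    funext e
    simp [hd]
  have hL0PD : L0.PosDef := lapMat_posDef G hG v0 f hf
  have hLgPD : (L0 + (1:ℝ) • Ld).PosDef := by
    rw [← hkey 1, hfg]
    exact lapMat_posDef G hG v0 g hg
  have hdetL0 : 0 < L0.det := hL0PD.det_pos
  set hPSD := hL0PD.posSemidef with hPSDdef
  set C := CFC.sqrt L0 with hCdef
  have hCherm : C.IsHermitian := (Matrix.nonneg_iff_posSemidef.mp (CFC.sqrt_nonneg L0)).1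
  have hCC : C * C = L0 := CFC.sqrt_mul_sqrt_self L0 hPSD.nonneg
  have hdetC : IsUnit C.det := by
    rw [isUnit_iff_ne_zero]
    intro h0
    have h1 : C.det * C.det = L0.det := by rw [← Matrix.det_mul, hCC]
    rw [h0, mul_zero] at h1
    exact hdetL0.ne h1
  have hLdherm : Ld.IsHermitian := lapMat_isHermitian G v0 d
  have hCinv : C⁻¹.IsHermitian := by
    show C⁻¹ᴴ = C⁻¹
    rw [Matrix.conjTranspose_nonsing_inv, show Cᴴ = C from hCherm]
  set N := C⁻¹ * Ld * C⁻¹ with hNdef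
  have hNherm : N.IsHermitian := by
    show Nᴴ = N
    rw [hNdef, Matrix.conjTranspose_mul, Matrix.conjTranspose_mul,
      show C⁻¹ᴴ = C⁻¹ from hCinv, show Ldᴴ = Ld from hLdherm, Matrix.mul_assoc]
  have hCNC : ∀ t : ℝ, L0 + t • Ld = C * (1 + t • N) * C := by
    intro t
    have h2 : C * N * C = Ld := by
      rw [hNdef]
      rw [show C * (C⁻¹ * Ld * C⁻¹) * C = C * C⁻¹ * Ld * (C⁻¹ * C) by
        simp only [Matrix.mul_assoc]]
      rw [Matrix.mul_nonsing_inv _ hdetC, Matrix.nonsing_inv_mul _ hdetC,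
        Matrix.one_mul, Matrix.mul_one]
    have h1 : C * (1 + t • N) * C = C * C + t • (C * N * C) := by
      rw [Matrix.mul_add, Matrix.add_mul, Matrix.mul_one, mul_smul_comm, smul_mul_assoc]
    rw [h1, h2, hCC]
  have hdetfact : ∀ t : ℝ, (L0 + t • Ld).det = L0.det * (1 + t • N).det := by
    intro t
    rw [hCNC t, Matrix.det_mul, Matrix.det_mul]
    have hcc : C.det * C.det = L0.det := by rw [← Matrix.det_mul, hCC]
    calc C.det * (1 + t • N).det * C.det = C.det * C.det * (1 + t • N).det := by ring
      _ = L0.det * (1 + t • N).det := by rw [hcc]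
  have hNdiag : ∀ t : ℝ, (1 + t • N).det = ∏ i, (1 + t * hNherm.eigenvalues i) := by
    intro t
    have hU1 : (hNherm.eigenvectorUnitary : Matrix {u : V // u ≠ v0} {u : V // u ≠ v0} ℝ)
        * star (hNherm.eigenvectorUnitary : Matrix {u : V // u ≠ v0} {u : V // u ≠ v0} ℝ) = 1 :=
      Unitary.mul_star_self_of_mem hNherm.eigenvectorUnitary.2
    have hspec := hNherm.spectral_theorem
    have hof : (RCLike.ofReal ∘ hNherm.eigenvalues : _ → ℝ) = hNherm.eigenvalues :=
      funext fun _ => rfl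
    rw [hof, Unitary.conjStarAlgAut_apply] at hspec
    have h1 : (1 : Matrix {u : V // u ≠ v0} {u : V // u ≠ v0} ℝ) + t • N
        = (hNherm.eigenvectorUnitary : Matrix {u : V // u ≠ v0} {u : V // u ≠ v0} ℝ)
          * ((1 : Matrix {u : V // u ≠ v0} {u : V // u ≠ v0} ℝ) + t • Matrix.diagonal hNherm.eigenvalues)
          * star (hNherm.eigenvectorUnitary : Matrix {u : V // u ≠ v0} {u : V // u ≠ v0} ℝ) := by
      rw [Matrix.mul_add, Matrix.add_mul, Matrix.mul_one, hU1]
      congr 1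
      rw [mul_smul_comm, smul_mul_assoc, ← hspec]
    have h2 : (1 : Matrix {u : V // u ≠ v0} {u : V // u ≠ v0} ℝ) + t • Matrix.diagonal hNherm.eigenvalues
        = Matrix.diagonal (fun i => 1 + t * hNherm.eigenvalues i) := by
      rw [← Matrix.diagonal_one, ← Matrix.diagonal_smul, Matrix.diagonal_add]
      congr 1
    have hdetU : (hNherm.eigenvectorUnitary : Matrix {u : V // u ≠ v0} {u : V // u ≠ v0} ℝ).det
        * (star (hNherm.eigenvectorUnitary : Matrix {u : V // u ≠ v0} {u : V // u ≠ v0} ℝ)).det = 1 := by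
      rw [← Matrix.det_mul, hU1, Matrix.det_one]
    rw [h1, Matrix.det_mul, Matrix.det_mul, h2, Matrix.det_diagonal,
      mul_right_comm, hdetU, one_mul]
  have hred : ∀ t : ℝ, tau G (f + t • d)
      = L0.det * ∏ i, (1 + t * hNherm.eigenvalues i) := by
    intro t
    rw [matrix_tree G v0 (f + t • d), hkey t, hdetfact t, hNdiag t]
  have hsum0 : ∑ i, hNherm.eigenvalues i = 0 := by
    have hA := hasDerivAt_tau G f d
    have hB : HasDerivAt (fun t : ℝ => L0.det * ∏ i, (1 + t * hNherm.eigenvalues i))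
        (L0.det * ∑ i, hNherm.eigenvalues i) 0 := by
      have h1 : ∀ i ∈ Finset.univ, HasDerivAt
          (fun t : ℝ => 1 + t * hNherm.eigenvalues i) (hNherm.eigenvalues i) 0 :=
        fun i _ => by simpa using
          ((hasDerivAt_id (0:ℝ)).mul_const (hNherm.eigenvalues i)).const_add 1
      have h2 := (HasDerivAt.fun_finsetProd h1).const_mul L0.det
      simpa using h2
    have hfun : (fun t : ℝ => tau G (f + t • d))
        = fun t : ℝ => L0.det * ∏ i, (1 + t * hNherm.eigenvalues i) := funext hred
    rw [hfun] at hA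
    have hEq := hA.unique hB
    have h0 : L0.det * ∑ i, hNherm.eigenvalues i = 0 := by
      rw [← hEq]
      exact hgrad
    rcases mul_eq_zero.mp h0 with h | h
    · exact absurd h hdetL0.ne'
    · exact h
  have hpos : ∀ i, 0 < 1 + hNherm.eigenvalues i := by
    intro i
    set v : {u : V // u ≠ v0} → ℝ :=
      (WithLp.equiv 2 _) (hNherm.eigenvectorBasis i) with hv
    have hvne : v ≠ 0 := by
      intro h0
      apply hNherm.eigenvectorBasis.orthonormal.ne_zero i
      have h1 : hNherm.eigenvectorBasis i = (WithLp.equiv 2 _).symm v := by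
        rw [hv]
        simp
      rw [h1, h0]
      rfl
    have heig : N *ᵥ v = hNherm.eigenvalues i • v := hNherm.mulVec_eigenvectorBasis i
    set y := C⁻¹ *ᵥ v with hy
    have hyne : y ≠ 0 := by
      intro h0
      apply hvne
      calc v = 1 *ᵥ v := (Matrix.one_mulVec v).symm
        _ = (C * C⁻¹) *ᵥ v := by rw [Matrix.mul_nonsing_inv _ hdetC]
        _ = C *ᵥ (C⁻¹ *ᵥ v) := (Matrix.mulVec_mulVec v C C⁻¹).symm
        _ = C *ᵥ 0 := by rw [← hy, h0]
        _ = 0 := Matrix.mulVec_zero C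
    have hq1 : v ⬝ᵥ (((1 : Matrix {u : V // u ≠ v0} {u : V // u ≠ v0} ℝ) + N) *ᵥ v)
        = (1 + hNherm.eigenvalues i) * (v ⬝ᵥ v) := by
      rw [Matrix.add_mulVec, Matrix.one_mulVec, heig, dotProduct_add, dotProduct_smul]
      simp only [smul_eq_mul]
      ring
    have hNform : (1 : Matrix {u : V // u ≠ v0} {u : V // u ≠ v0} ℝ) + N = C⁻¹ * (L0 + (1:ℝ) • Ld) * C⁻¹ := by
      rw [hCNC 1]
      rw [show C⁻¹ * (C * (1 + (1:ℝ) • N) * C) * C⁻¹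
          = (C⁻¹ * C) * (1 + (1:ℝ) • N) * (C * C⁻¹) by
        simp only [Matrix.mul_assoc]]
      rw [Matrix.mul_nonsing_inv _ hdetC, Matrix.nonsing_inv_mul _ hdetC,
        Matrix.one_mul, Matrix.mul_one, one_smul]
    have hq2 : v ⬝ᵥ (((1 : Matrix {u : V // u ≠ v0} {u : V // u ≠ v0} ℝ) + N) *ᵥ v)
        = y ⬝ᵥ ((L0 + (1:ℝ) • Ld) *ᵥ y) := by
      rw [hNform, ← Matrix.mulVec_mulVec, ← Matrix.mulVec_mulVec,
        Matrix.dotProduct_mulVec v C⁻¹ _]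
      congr 1
      have hCt : C⁻¹ᵀ = C⁻¹ := hCinv
      rw [← hCt, Matrix.vecMul_transpose]
    have hquadpos := hLgPD.dotProduct_mulVec_pos hyne
    have hstar : star y = y := funext fun u => star_trivial _
    rw [hstar] at hquadpos
    have hvv : 0 < v ⬝ᵥ v := dotProduct_self_pos hvne
    have hfin : 0 < (1 + hNherm.eigenvalues i) * (v ⬝ᵥ v) := by
      rw [hq1.symm, hq2]
      exact hquadpos
    rcases mul_pos_iff.mp hfin with ⟨h1, _⟩ | ⟨_, h2⟩
    · exact h1
    · linarith
  calc tau G g = tau G (f + (1:ℝ) • d) := by rw [hfg]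
    _ = L0.det * ∏ i, (1 + 1 * hNherm.eigenvalues i) := hred 1
    _ ≤ L0.det * ∏ i, Real.exp (hNherm.eigenvalues i) := by
        apply mul_le_mul_of_nonneg_left _ hdetL0.le
        apply Finset.prod_le_prod
        · intro i _
          have := hpos i
          linarith
        · intro i _
          have := Real.add_one_le_exp (hNherm.eigenvalues i)
          linarith
    _ = L0.det * Real.exp (∑ i, hNherm.eigenvalues i) := by rw [Real.exp_sum]
    _ = L0.det := by rw [hsum0, Real.exp_zero, mul_one]
    _ = tau G f := (matrix_tree G v0 f).symm



/-! ### spaces of valuations -/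

/-! ### vertex/edge summation lemmas -/

lemma sum_ite_mem_edge (e : G.edgeSet) (c : V → ℝ) :
    ∑ v : V, (if v ∈ (e : Sym2 V) then c v else 0)
      = c (pairup (e : Sym2 V)).1 + c (pairup (e : Sym2 V)).2 := by
  have hne := pairup_ne (G.not_isDiag_of_mem_edgeSet e.2)
  have hsplit : ∀ v : V, (if v ∈ (e : Sym2 V) then c v else 0)
      = (if v = (pairup (e : Sym2 V)).1 then c v else 0)
        + (if v = (pairup (e : Sym2 V)).2 then c v else 0) := by
    intro v
    by_cases h1 : v = (pairup (e : Sym2 V)).1 <;>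
      by_cases h2 : v = (pairup (e : Sym2 V)).2 <;>
      simp_all [mem_iff_pairup (e := (e : Sym2 V))]
  rw [Finset.sum_congr rfl (fun v _ => hsplit v), Finset.sum_add_distrib,
    Finset.sum_ite_eq', Finset.sum_ite_eq']
  simp

lemma sum_edge_vertex (c : G.edgeSet → ℝ) (lam : V → ℝ) :
    ∑ e : G.edgeSet, c e * (lam (pairup (e : Sym2 V)).1 + lam (pairup (e : Sym2 V)).2)
      = ∑ v : V, lam v * ∑ e : G.edgeSet, (if v ∈ (e : Sym2 V) then c e else 0) := by
  have h1 : ∀ v : V, lam v * ∑ e : G.edgeSet, (if v ∈ (e : Sym2 V) then c e else 0)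
      = ∑ e : G.edgeSet, (if v ∈ (e : Sym2 V) then c e * lam v else 0) := by
    intro v
    rw [Finset.mul_sum]
    apply Finset.sum_congr rfl
    intro e _
    split <;> ring
  rw [Finset.sum_congr rfl (fun v _ => h1 v), Finset.sum_comm]
  apply Finset.sum_congr rfl
  intro e _
  rw [sum_ite_mem_edge G e (fun v => c e * lam v)]
  ring

lemma sum_d_zero (d : G.edgeSet → ℝ)
    (hd : ∀ v : V, ∑ e : G.edgeSet, (if v ∈ (e : Sym2 V) then d e else 0) = 0) :
    ∑ e : G.edgeSet, d e = 0 := by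
  have h1 : ∑ v : V, ∑ e : G.edgeSet, (if v ∈ (e : Sym2 V) then d e else 0) = 0 := by
    rw [Finset.sum_congr rfl (fun v _ => hd v)]
    simp
  rw [Finset.sum_comm] at h1
  have h2 : ∀ e : G.edgeSet, ∑ v : V, (if v ∈ (e : Sym2 V) then d e else 0) = d e + d e :=
    fun e => sum_ite_mem_edge G e (fun _ => d e)
  rw [Finset.sum_congr rfl (fun e _ => h2 e)] at h1
  have h3 : ∑ e : G.edgeSet, (d e + d e) = 2 * ∑ e : G.edgeSet, d e := by
    rw [Finset.mul_sum]
    apply Finset.sum_congr rfl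
    intro e _
    ring
  rw [h3] at h1
  linarith

/-! ### the Lagrange multiplier extraction -/

lemma exists_lam_of_orth (grad : G.edgeSet → ℝ)
    (hcrit : ∀ d : G.edgeSet → ℝ,
      (∀ v : V, ∑ e : G.edgeSet, (if v ∈ (e : Sym2 V) then d e else 0) = 0) →
      ∑ e : G.edgeSet, d e * grad e = 0) :
    ∃ lam : V → ℝ, ∀ e : G.edgeSet,
      grad e = lam (pairup (e : Sym2 V)).1 + lam (pairup (e : Sym2 V)).2 := by
  classical
  have hinner : ∀ x y : EuclideanSpace ℝ G.edgeSet,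
      (inner ℝ x y : ℝ) = ∑ e : G.edgeSet, x e * y e := by
    intro x y
    rw [PiLp.inner_apply]
    simp [RCLike.inner_apply, mul_comm]
  set T : (V → ℝ) →ₗ[ℝ] EuclideanSpace ℝ G.edgeSet :=
    { toFun := fun lam => (WithLp.equiv 2 (G.edgeSet → ℝ)).symm
        (fun e => lam (pairup (e : Sym2 V)).1 + lam (pairup (e : Sym2 V)).2)
      map_add' := by
        intro a b
        ext e
        simp
        ring
      map_smul' := by
        intro r a
        ext e
        simp
        ring } with hT
  have hTapp : ∀ (lam : V → ℝ) (e : G.edgeSet),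
      (T lam) e = lam (pairup (e : Sym2 V)).1 + lam (pairup (e : Sym2 V)).2 := by
    intro lam e
    rfl
  set W := LinearMap.range T with hW
  set gradE : EuclideanSpace ℝ G.edgeSet := (WithLp.equiv 2 (G.edgeSet → ℝ)).symm grad
    with hgradE
  have hgradEapp : ∀ e : G.edgeSet, gradE e = grad e := fun e => rfl
  set dd : EuclideanSpace ℝ G.edgeSet := gradE - W.starProjection gradE with hdd
  have hddW : dd ∈ Wᗮ := Submodule.sub_starProjection_mem_orthogonal (K := W) gradE
  have hker : ∀ v : V, ∑ e : G.edgeSet, (if v ∈ (e : Sym2 V) then dd e else 0) = 0 := by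
    intro v
    set δv : V → ℝ := fun u => if u = v then 1 else 0 with hδv
    have hw : T δv ∈ W := LinearMap.mem_range.mpr ⟨δv, rfl⟩
    have h0 : (inner ℝ (T δv) dd : ℝ) = 0 := (Submodule.mem_orthogonal W dd).mp hddW _ hw
    rw [hinner] at h0
    have h1 : ∀ e : G.edgeSet, (T δv) e * dd e
        = (if v ∈ (e : Sym2 V) then dd e else 0) := by
      intro e
      rw [hTapp]
      have hne := pairup_ne (G.not_isDiag_of_mem_edgeSet e.2)
      simp only [hδv]
      by_cases hm : v ∈ (e : Sym2 V)
      · rw [if_pos hm]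
        rcases mem_iff_pairup.mp hm with h | h
        · have hv2 : ¬((pairup (e : Sym2 V)).2 = v) := fun hh => hne (h ▸ hh).symm
          rw [if_pos h.symm, if_neg hv2]
          ring
        · have hv1 : ¬((pairup (e : Sym2 V)).1 = v) := fun hh => hne (hh.trans h)
          rw [if_neg hv1, if_pos h.symm]
          ring
      · have hn1 : ¬((pairup (e : Sym2 V)).1 = v) :=
          fun hh => hm (mem_iff_pairup.mpr (Or.inl hh.symm))
        have hn2 : ¬((pairup (e : Sym2 V)).2 = v) :=
          fun hh => hm (mem_iff_pairup.mpr (Or.inr hh.symm))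
        rw [if_neg hm, if_neg hn1, if_neg hn2]
        ring
    rw [← Finset.sum_congr rfl (fun e _ => h1 e)]
    exact h0
  have h2 : ∑ e : G.edgeSet, dd e * grad e = 0 := hcrit dd hker
  have h3 : (inner ℝ dd gradE : ℝ) = 0 := by
    rw [hinner]
    exact h2
  have h4 : gradE = W.starProjection gradE + dd := by
    rw [hdd]
    abel
  have h5 : (inner ℝ dd (W.starProjection gradE : EuclideanSpace ℝ G.edgeSet) : ℝ)
      = 0 := by
    rw [real_inner_comm]
    exact (Submodule.mem_orthogonal W dd).mp hddW _ (W.starProjection_apply_mem gradE)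
  have h6 : (inner ℝ dd dd : ℝ) = 0 := by
    have h7 : (inner ℝ dd gradE : ℝ)
        = inner ℝ dd (W.starProjection gradE : EuclideanSpace ℝ G.edgeSet)
          + inner ℝ dd dd := by
      conv_lhs => rw [h4]
      exact inner_add_right _ _ _
    rw [h3, h5] at h7
    linarith [h7]
  have h8 : dd = 0 := inner_self_eq_zero.mp h6
  have h9 : gradE ∈ W := by
    rw [h4, h8, add_zero]
    exact W.starProjection_apply_mem gradE
  obtain ⟨lam, hlam⟩ := LinearMap.mem_range.mp h9
  refine ⟨lam, fun e => ?_⟩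
  have := congrFun (congrArg (fun x : EuclideanSpace ℝ G.edgeSet => (x : G.edgeSet → ℝ)) hlam) e
  rw [← hTapp lam e]
  exact this.symm



/-! ### the main theorem -/


/-- A valuation `f ∈ T(G)` is the maximum of the weighted tree number
`τ` over `T(G)` if and only if there exist constants `λ_v`, `v ∈ V(G)`, such that for
every edge `e = v w` one has `τ_e(f) = λ_v + λ_w`. -/
theorem tau_max_T_iff (hG : G.Connected) (f : G.edgeSet → ℝ) (hf : f ∈ TSpace G) :
    (∀ g ∈ TSpace G, tau G g ≤ tau G f) ↔
      ∃ lam : V → ℝ, ∀ (v w : V) (h : G.Adj v w),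
        tauE G ⟨s(v, w), G.mem_edgeSet.mpr h⟩ f = lam v + lam w := by
  obtain ⟨⟨hfpos, hfsum⟩, hfdeg⟩ := hf
  constructor
  · intro hmax
    have hcrit : ∀ d : G.edgeSet → ℝ,
        (∀ v : V, ∑ e : G.edgeSet, (if v ∈ (e : Sym2 V) then d e else 0) = 0) →
        ∑ e : G.edgeSet, d e * tauE G e f = 0 := by
      intro d hd
      by_cases hd0 : d = 0
      · rw [hd0]
        simp
      · have hEne : Nonempty G.edgeSet := by
          by_contra hne
          rw [not_nonempty_iff] at hne
          exact hd0 (funext fun e => (hne.false e).elim)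
        have hune : (Finset.univ : Finset G.edgeSet).Nonempty := Finset.univ_nonempty
        set ε := Finset.univ.inf' hune (fun e : G.edgeSet => f e / (|d e| + 1)) with hε
        have hεpos : 0 < ε := by
          rw [hε, Finset.lt_inf'_iff]
          intro e _
          exact div_pos (hfpos e) (by positivity)
        have hmem : ∀ t : ℝ, |t| < ε → f + t • d ∈ TSpace G := by
          intro t ht
          have hpos : ∀ e, 0 < (f + t • d) e := by
            intro e
            have h1 : ε ≤ f e / (|d e| + 1) := Finset.inf'_le _ (Finset.mem_univ e)
            have h2 : ε * (|d e| + 1) ≤ f e := by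
              rw [← le_div_iff₀ (by positivity : (0:ℝ) < |d e| + 1)]
              exact h1
            have h3 : |t| * (|d e| + 1) < ε * (|d e| + 1) :=
              mul_lt_mul_of_pos_right ht (by positivity)
            have h4 : |t * d e| ≤ |t| * (|d e| + 1) := by
              rw [abs_mul]
              nlinarith [abs_nonneg t, abs_nonneg (d e)]
            have h5 : -(t * d e) ≤ |t * d e| := neg_le_abs _
            simp only [Pi.add_apply, Pi.smul_apply, smul_eq_mul]
            nlinarith
          have hdsum : ∑ e : G.edgeSet, d e = 0 := sum_d_zero G d hd
          refine ⟨⟨hpos, ?_⟩, ?_⟩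
          · have h6 : ∑ e : G.edgeSet, (f + t • d) e
                = ∑ e : G.edgeSet, f e + t * ∑ e : G.edgeSet, d e := by
              rw [Finset.mul_sum, ← Finset.sum_add_distrib]
              apply Finset.sum_congr rfl
              intro e _
              simp only [Pi.add_apply, Pi.smul_apply, smul_eq_mul]
            rw [h6, hdsum, hfsum]
            ring
          · intro v
            have h7 : ∑ e : G.edgeSet, (if v ∈ (e : Sym2 V) then (f + t • d) e else 0)
                = (∑ e : G.edgeSet, if v ∈ (e : Sym2 V) then f e else 0)
                  + t * ∑ e : G.edgeSet, (if v ∈ (e : Sym2 V) then d e else 0) := by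
              rw [Finset.mul_sum, ← Finset.sum_add_distrib]
              apply Finset.sum_congr rfl
              intro e _
              by_cases hm : v ∈ (e : Sym2 V) <;> simp [hm]
            rw [h7, hd v, hfdeg v]
            ring
        have hDA := hasDerivAt_tau G f d
        have hloc : IsLocalMax (fun t : ℝ => tau G (f + t • d)) 0 := by
          have hev : ∀ᶠ t : ℝ in nhds 0, |t| < ε := by
            have := eventually_abs_sub_lt (0:ℝ) hεpos
            simpa using this
          refine Filter.Eventually.mono hev (fun t ht => ?_)
          have h6 := hmax (f + t • d) (hmem t ht)
          simpa using h6
        exact hloc.hasDerivAt_eq_zero hDA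
    obtain ⟨lam, hlam⟩ := exists_lam_of_orth G (fun e => tauE G e f) hcrit
    refine ⟨lam, fun v w h => ?_⟩
    have h1 := hlam ⟨s(v, w), G.mem_edgeSet.mpr h⟩
    have h2 : pairup ((⟨s(v, w), G.mem_edgeSet.mpr h⟩ : G.edgeSet) : Sym2 V)
        = pairup s(v, w) := rfl
    have hmk := pairup_mk v w
    split_ifs at hmk
    · rw [h2, hmk] at h1
      exact h1
    · rw [h2, hmk] at h1
      rw [h1]
      ring
  · rintro ⟨lam, hlam⟩ g hg
    obtain ⟨⟨hgpos, _⟩, hgdeg⟩ := hg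
    apply tau_le_of_vanishing G hG f g hfpos hgpos
    have hE : ∀ e : G.edgeSet, tauE G e f
        = lam (pairup (e : Sym2 V)).1 + lam (pairup (e : Sym2 V)).2 := by
      intro e
      have hadj : G.Adj (pairup (e : Sym2 V)).1 (pairup (e : Sym2 V)).2 := by
        rw [← G.mem_edgeSet, pairup_spec]
        exact e.2
      have h1 := hlam _ _ hadj
      have h2 : (⟨s((pairup (e : Sym2 V)).1, (pairup (e : Sym2 V)).2),
          G.mem_edgeSet.mpr hadj⟩ : G.edgeSet) = e := Subtype.ext (pairup_spec _)
      rw [h2] at h1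
      exact h1
    calc ∑ e : G.edgeSet, (g e - f e) * tauE G e f
        = ∑ e : G.edgeSet, (g e - f e)
            * (lam (pairup (e : Sym2 V)).1 + lam (pairup (e : Sym2 V)).2) := by
          apply Finset.sum_congr rfl
          intro e _
          rw [hE e]
      _ = ∑ v : V, lam v * ∑ e : G.edgeSet, (if v ∈ (e : Sym2 V) then g e - f e else 0) :=
          sum_edge_vertex G _ lam
      _ = 0 := by
          apply Finset.sum_eq_zero
          intro v _
          have h3 : ∑ e : G.edgeSet, (if v ∈ (e : Sym2 V) then g e - f e else 0)
              = (∑ e : G.edgeSet, if v ∈ (e : Sym2 V) then g e else 0)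
                - (∑ e : G.edgeSet, if v ∈ (e : Sym2 V) then f e else 0) := by
            rw [← Finset.sum_sub_distrib]
            apply Finset.sum_congr rfl
            intro e _
            by_cases hm : v ∈ (e : Sym2 V) <;> simp [hm]
          rw [h3, hgdeg v, hfdeg v]
          ring

end ExtremalGraphs
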